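/- Let A ∈ ℝ^{3×3}, B̃ ∈ ℝ^{3×2}, γ̃ > 0, let P ∈ ℝ^{3×3} be symmetric positive definite satisfying AᵀP + PA + I - (1/γ̃)·P B̃ B̃ᵀ P = 0, and set K = -(1/γ̃)·B̃ᵀP. Let x : ℝ → ℝ³ be differentiable with x'(t) = (A + B̃K)·x(t) for all t ≥ 0. Then x(t) → 0 as t → ∞. -/

import Mathlib

open Matrix


lemma mulVec_dot_swap {m n : Type*} [Fintype m] [Fintype n]
    (M : Matrix m n ℝ) (y : n → ℝ) (z : m → ℝ) :
    (M.mulVec y) ⬝ᵥ z = y ⬝ᵥ (Mᵀ.mulVec z) := by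
  rw [Matrix.mulVec_transpose, dotProduct_comm, Matrix.dotProduct_mulVec,
    dotProduct_comm]

lemma quad_hasDerivAt (P : Matrix (Fin 3) (Fin 3) ℝ) {x : ℝ → Fin 3 → ℝ} {v : Fin 3 → ℝ} {t : ℝ}
    (hx : HasDerivAt x v t) :
    HasDerivAt (fun s => x s ⬝ᵥ P.mulVec (x s))
      (v ⬝ᵥ P.mulVec (x t) + x t ⬝ᵥ P.mulVec v) t := by
  have hxi : ∀ i, HasDerivAt (fun s => x s i) (v i) t := fun i => hasDerivAt_pi.1 hx i
  have h : ∀ i ∈ Finset.univ, HasDerivAt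
      (fun s => ∑ j, x s i * (P i j * x s j))
      (∑ j, (v i * (P i j * x t j) + x t i * (P i j * v j))) t := by
    intro i _
    exact HasDerivAt.fun_sum (fun j _ => (hxi i).fun_mul ((hxi j).const_mul (P i j)))
  have H := HasDerivAt.fun_sum h
  convert H using 1
  · rfl
  · rfl
  · ext s; simp [dotProduct, Matrix.mulVec, Finset.mul_sum]
  · simp [dotProduct, Matrix.mulVec, Finset.mul_sum, Finset.sum_add_distrib]

lemma dot_self_nonneg' {n : Type*} [Fintype n] (y : n → ℝ) : 0 ≤ y ⬝ᵥ y :=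
  Finset.sum_nonneg fun i _ => mul_self_nonneg _

lemma dot_self_pos {n : Type*} [Fintype n] {y : n → ℝ} (hy : y ≠ 0) : 0 < y ⬝ᵥ y := by
  rcases Function.ne_iff.1 hy with ⟨i, hi⟩
  have hi' : (0:ℝ) < y i * y i := mul_self_pos.2 (by simpa using hi)
  exact lt_of_lt_of_le hi' (Finset.single_le_sum (fun j _ => mul_self_nonneg (y j)) (Finset.mem_univ i))

lemma riccati_key (A P : Matrix (Fin 3) (Fin 3) ℝ) (B : Matrix (Fin 3) (Fin 2) ℝ) (γ : ℝ)
    (hP : Pᵀ = P)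
    (hric : Aᵀ * P + P * A + 1 - (1 / γ) • (P * B * Bᵀ * P) = 0) :
    (A + B * (-(1 / γ) • (Bᵀ * P)))ᵀ * P + P * (A + B * (-(1 / γ) • (Bᵀ * P)))
      = -1 - (1 / γ) • (P * B * Bᵀ * P) := by
  have hsum : Aᵀ * P + P * A = (1 / γ) • (P * B * Bᵀ * P) - 1 := by
    have h := hric
    have : Aᵀ * P + P * A + 1 = (1 / γ) • (P * B * Bᵀ * P) := by
      rwa [sub_eq_zero] at h
    rw [← this]; abel
  rw [Matrix.mul_smul, Matrix.transpose_add, Matrix.transpose_smul, Matrix.transpose_mul,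
    Matrix.transpose_mul, Matrix.transpose_transpose, hP, Matrix.add_mul, Matrix.mul_add,
    Matrix.smul_mul, Matrix.mul_smul]
  rw [← Matrix.mul_assoc, ← Matrix.mul_assoc]
  linear_combination (norm := module) hsum

lemma quad_val (A P : Matrix (Fin 3) (Fin 3) ℝ) (B : Matrix (Fin 3) (Fin 2) ℝ) (γ : ℝ)
    (hP : Pᵀ = P)
    (hric : Aᵀ * P + P * A + 1 - (1 / γ) • (P * B * Bᵀ * P) = 0) (y : Fin 3 → ℝ) :
    ((A + B * (-(1 / γ) • (Bᵀ * P))).mulVec y) ⬝ᵥ P.mulVec y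
      + y ⬝ᵥ P.mulVec ((A + B * (-(1 / γ) • (Bᵀ * P))).mulVec y)
    = -(y ⬝ᵥ y) - (1 / γ) * (((Bᵀ * P).mulVec y) ⬝ᵥ ((Bᵀ * P).mulVec y)) := by
  set Acl := A + B * (-(1 / γ) • (Bᵀ * P)) with hAcl
  have hfact : P * B * Bᵀ * P = (Bᵀ * P)ᵀ * (Bᵀ * P) := by
    rw [Matrix.transpose_mul, Matrix.transpose_transpose, hP, Matrix.mul_assoc]
  rw [mulVec_dot_swap, Matrix.mulVec_mulVec, Matrix.mulVec_mulVec,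
    ← dotProduct_add, ← Matrix.add_mulVec, riccati_key A P B γ hP hric,
    Matrix.sub_mulVec, Matrix.neg_mulVec, Matrix.one_mulVec, Matrix.smul_mulVec,
    dotProduct_sub, dotProduct_neg, dotProduct_smul, smul_eq_mul,
    hfact, ← Matrix.mulVec_mulVec, ← mulVec_dot_swap]

lemma quad_bounds (P : Matrix (Fin 3) (Fin 3) ℝ)
    (hPpos : ∀ y : Fin 3 → ℝ, y ≠ 0 → 0 < y ⬝ᵥ P.mulVec y) :
    ∃ m M : ℝ, 0 < m ∧ 0 < M ∧
      ∀ y : Fin 3 → ℝ, m * (y ⬝ᵥ y) ≤ y ⬝ᵥ P.mulVec y ∧ y ⬝ᵥ P.mulVec y ≤ M * (y ⬝ᵥ y) := by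
  set S : Set (Fin 3 → ℝ) := {y | y ⬝ᵥ y = 1} with hS
  have hf : Continuous fun y : Fin 3 → ℝ => y ⬝ᵥ P.mulVec y := by
    simp only [dotProduct, Matrix.mulVec]
    fun_prop
  have hScl : IsClosed S := isClosed_eq (by simp only [dotProduct]; fun_prop) continuous_const
  have hSsub : S ⊆ Metric.closedBall 0 1 := by
    intro y hy
    simp only [Metric.mem_closedBall, dist_zero_right]
    rw [pi_norm_le_iff_of_nonneg zero_le_one]
    intro i
    have h1 : y i * y i ≤ 1 := hy ▸ Finset.single_le_sum
      (fun j _ => mul_self_nonneg (y j)) (Finset.mem_univ i)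
    rw [Real.norm_eq_abs, abs_le]
    constructor <;> nlinarith
  have hScomp : IsCompact S :=
    (isCompact_closedBall (0 : Fin 3 → ℝ) 1).of_isClosed_subset hScl hSsub
  have hSne : S.Nonempty := ⟨![1, 0, 0], by simp [hS, dotProduct, Fin.sum_univ_three]⟩
  obtain ⟨zm, hzmS, hzm'⟩ := hScomp.exists_isMinOn hSne hf.continuousOn
  have hzm := isMinOn_iff.1 hzm'
  obtain ⟨zM, hzMS, hzM'⟩ := hScomp.exists_isMaxOn hSne hf.continuousOn
  have hzM := isMaxOn_iff.1 hzM'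
  have hzm0 : zm ≠ 0 := by
    intro h; rw [h] at hzmS; simp [hS, dotProduct] at hzmS
  have hzM0 : zM ≠ 0 := by
    intro h; rw [h] at hzMS; simp [hS, dotProduct] at hzMS
  refine ⟨zm ⬝ᵥ P.mulVec zm, zM ⬝ᵥ P.mulVec zM, hPpos zm hzm0, hPpos zM hzM0, ?_⟩
  intro y
  by_cases hy : y = 0
  · subst hy; simp
  · have hyy : 0 < y ⬝ᵥ y := dot_self_pos hy
    set a : ℝ := Real.sqrt (y ⬝ᵥ y) with ha
    have ha0 : 0 < a := Real.sqrt_pos.2 hyy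
    have ha2 : a * a = y ⬝ᵥ y := Real.mul_self_sqrt hyy.le
    set u : Fin 3 → ℝ := a⁻¹ • y with hu
    have huS : u ∈ S := by
      show u ⬝ᵥ u = 1
      rw [hu, smul_dotProduct, dotProduct_smul, smul_eq_mul, smul_eq_mul, ← ha2]
      field_simp
    have hyu : y ⬝ᵥ P.mulVec y = (a * a) * (u ⬝ᵥ P.mulVec u) := by
      rw [hu, smul_dotProduct, Matrix.mulVec_smul, dotProduct_smul,
        smul_eq_mul, smul_eq_mul]
      field_simp
    constructor
    · have := hzm u huS
      calc (zm ⬝ᵥ P.mulVec zm) * (y ⬝ᵥ y) = (a*a) * (zm ⬝ᵥ P.mulVec zm) := by rw [ha2]; ring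
        _ ≤ (a*a) * (u ⬝ᵥ P.mulVec u) := by nlinarith
        _ = y ⬝ᵥ P.mulVec y := hyu.symm
    · have := hzM u huS
      calc y ⬝ᵥ P.mulVec y = (a*a) * (u ⬝ᵥ P.mulVec u) := hyu
        _ ≤ (a*a) * (zM ⬝ᵥ P.mulVec zM) := by nlinarith
        _ = (zM ⬝ᵥ P.mulVec zM) * (y ⬝ᵥ y) := by rw [ha2]; ring

/-- let `P = Pᵀ` be positive definite and solve the Riccati equation
`AᵀP + PA + I - (1/γ̃)·P B̃ B̃ᵀ P = 0` with `γ̃ > 0`, `K = -(1/γ̃)·B̃ᵀP`, and let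
`x : ℝ → ℝ³` be differentiable with `x' = (A + B̃K) x` for all `t ≥ 0`.
Then `x(t) → 0` as `t → ∞`. -/
theorem riccati_closed_loop_convergence (A P : Matrix (Fin 3) (Fin 3) ℝ)
    (B : Matrix (Fin 3) (Fin 2) ℝ) (γ : ℝ) (hγ : 0 < γ)
    (hP : Pᵀ = P) (hPpos : ∀ y : Fin 3 → ℝ, y ≠ 0 → 0 < y ⬝ᵥ P.mulVec y)
    (hric : Aᵀ * P + P * A + 1 - (1 / γ) • (P * B * Bᵀ * P) = 0)
    (x : ℝ → Fin 3 → ℝ) (hdiff : Differentiable ℝ x)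
    (hx : ∀ t : ℝ, 0 ≤ t →
      HasDerivAt x ((A + B * (-(1 / γ) • (Bᵀ * P))).mulVec (x t)) t) :
    Filter.Tendsto x Filter.atTop (nhds 0) := by
  obtain ⟨m, M, hm, hM, hbnd⟩ := quad_bounds P hPpos
  set V : ℝ → ℝ := fun t => x t ⬝ᵥ P.mulVec (x t) with hVdef
  have hV0 : ∀ t, 0 ≤ V t := fun t =>
    le_trans (mul_nonneg hm.le (dot_self_nonneg' (x t))) (hbnd (x t)).1
  have hVder : ∀ t, 0 ≤ t → HasDerivAt V
      (-(x t ⬝ᵥ x t) - (1/γ) * (((Bᵀ*P).mulVec (x t)) ⬝ᵥ ((Bᵀ*P).mulVec (x t)))) t := by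
    intro t ht
    have h := quad_hasDerivAt P (hx t ht)
    rwa [quad_val A P B γ hP hric (x t)] at h
  have hVdiff : Differentiable ℝ V := fun t =>
    (quad_hasDerivAt P ((hdiff t).hasDerivAt)).differentiableAt
  set c : ℝ := M⁻¹ with hc
  have hc0 : 0 < c := inv_pos.2 hM
  have hexp : ∀ t : ℝ, HasDerivAt (fun s => Real.exp (c * s)) (Real.exp (c * t) * c) t := by
    intro t
    simpa using ((hasDerivAt_id t).const_mul c).exp
  set W : ℝ → ℝ := fun t => V t * Real.exp (c * t) with hWdef
  have hWdiff : Differentiable ℝ W :=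
    hVdiff.mul fun t => ((hexp t).differentiableAt)
  have hWanti : AntitoneOn W (Set.Ici 0) := by
    apply antitoneOn_of_deriv_nonpos (convex_Ici 0) hWdiff.continuous.continuousOn
      hWdiff.differentiableOn
    intro t ht
    rw [interior_Ici] at ht
    have ht' : (0:ℝ) ≤ t := le_of_lt ht
    have hd := (hVder t ht').fun_mul (hexp t)
    rw [hd.deriv]
    have h1 : c * V t ≤ x t ⬝ᵥ x t := by
      calc c * V t ≤ c * (M * (x t ⬝ᵥ x t)) :=
            mul_le_mul_of_nonneg_left (hbnd (x t)).2 hc0.le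
        _ = x t ⬝ᵥ x t := by rw [← mul_assoc, hc, inv_mul_cancel₀ hM.ne', one_mul]
    have h2 : (0:ℝ) ≤ ((Bᵀ*P).mulVec (x t)) ⬝ᵥ ((Bᵀ*P).mulVec (x t)) := dot_self_nonneg' _
    have he : (0:ℝ) < Real.exp (c * t) := Real.exp_pos _
    have hγ' : (0:ℝ) < 1/γ := by positivity
    nlinarith [mul_le_mul_of_nonneg_right h1 he.le, mul_nonneg (mul_nonneg hγ'.le h2) he.le]
  have hdecay : ∀ t, 0 ≤ t → V t ≤ V 0 * Real.exp (-(c*t)) := by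
    intro t ht
    have h : V t * Real.exp (c*t) ≤ V 0 := by
      simpa [hWdef] using hWanti Set.self_mem_Ici ht ht
    rw [Real.exp_neg, ← div_eq_mul_inv, le_div_iff₀ (Real.exp_pos _)]
    exact h
  have hupper : Filter.Tendsto (fun t => V 0 * Real.exp (-(c*t))) Filter.atTop (nhds 0) := by
    have h1 : Filter.Tendsto (fun t : ℝ => -(c*t)) Filter.atTop Filter.atBot := by
      simpa [neg_mul] using Filter.Tendsto.const_mul_atTop_of_neg (neg_neg_iff_pos.2 hc0) Filter.tendsto_id
    have h2 := Real.tendsto_exp_atBot.comp h1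
    simpa using h2.const_mul (V 0)
  have hVlim : Filter.Tendsto V Filter.atTop (nhds 0) := by
    apply tendsto_of_tendsto_of_tendsto_of_le_of_le' tendsto_const_nhds hupper
    · exact Filter.Eventually.of_forall hV0
    · filter_upwards [Filter.eventually_ge_atTop 0] with t ht using hdecay t ht
  rw [tendsto_zero_iff_norm_tendsto_zero]
  have hnorm : ∀ t, ‖x t‖ ≤ Real.sqrt (V t / m) := by
    intro t
    have hd : x t ⬝ᵥ x t ≤ V t / m := by
      rw [le_div_iff₀ hm, mul_comm]
      exact (hbnd (x t)).1
    rw [pi_norm_le_iff_of_nonneg (Real.sqrt_nonneg _)]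
    intro i
    rw [Real.norm_eq_abs, ← Real.sqrt_sq_eq_abs]
    apply Real.sqrt_le_sqrt
    calc (x t i)^2 = x t i * x t i := sq (x t i) ▸ (sq (x t i)).symm ▸ (by ring)
      _ ≤ x t ⬝ᵥ x t := Finset.single_le_sum (fun j _ => mul_self_nonneg (x t j)) (Finset.mem_univ i)
      _ ≤ V t / m := hd
  have hsq : Filter.Tendsto (fun t => Real.sqrt (V t / m)) Filter.atTop (nhds 0) := by
    have h1 : Filter.Tendsto (fun t => V t / m) Filter.atTop (nhds 0) := by
      simpa using hVlim.div_const m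
    have := (Real.continuous_sqrt.tendsto 0).comp h1
    simpa [Function.comp_def] using this
  exact tendsto_of_tendsto_of_tendsto_of_le_of_le tendsto_const_nhds hsq
    (fun t => norm_nonneg _) hnorm
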